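/- (Sturm Oscillation Theorem) Let V : ℝ → ℝ be bounded and continuous, a > 0, and E a real number. Then the set of Dirichlet eigenvalues of −d²/dx² + V on [0,a] that are strictly less than E is finite, the set of zeros of u(·,E) in (0,a) is finite, and the two sets have the same cardinality: #{E′ < E : E′ is a Dirichlet eigenvalue on [0,a]} = #{x ∈ (0,a) : u(x,E) = 0}. -/

import Mathlib

open Set

/-- `E` is a Dirichlet eigenvalue of `−d²/dx² + V` on `[0,a]`: there is a not-identically-zero
solution of `−u″ + Vu = Eu` on `[0,a]` with `u(0) = u(a) = 0`. -/
def IsDirichletEigenvalue (V : ℝ → ℝ) (a E : ℝ) : Prop :=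
  ∃ u : ℝ → ℝ, ContDiff ℝ 2 u ∧
    (∀ x ∈ Set.Icc 0 a, deriv (deriv u) x = (V x - E) * u x) ∧
    (∃ x ∈ Set.Icc 0 a, u x ≠ 0) ∧ u 0 = 0 ∧ u a = 0


open Real Set

noncomputable section
namespace SturmAux


/-- The Prüfer vector field. -/
def F (V : ℝ → ℝ) (E' x y : ℝ) : ℝ := cos y ^ 2 + (E' - V x) * sin y ^ 2

lemma cont_of_deriv {θ : ℝ → ℝ} {g : ℝ → ℝ} (h : ∀ x, HasDerivAt θ (g x) x) :
    Continuous θ :=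
  continuous_iff_continuousAt.mpr fun x => (h x).differentiableAt.continuousAt

lemma hasDerivAt_F (V : ℝ → ℝ) (E' x y : ℝ) :
    HasDerivAt (fun y => F V E' x y) ((E' - V x - 1) * (2 * sin y * cos y)) y := by
  have h1 : HasDerivAt (fun y => cos y ^ 2) (2 * cos y ^ 1 * (-sin y)) y :=
    (Real.hasDerivAt_cos y).pow 2
  have h2 : HasDerivAt (fun y => (E' - V x) * sin y ^ 2)
      ((E' - V x) * (2 * sin y ^ 1 * cos y)) y :=
    ((Real.hasDerivAt_sin y).pow 2).const_mul _
  have := h1.add h2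
  refine this.congr_deriv (Eq.symm ?_)
  ring

lemma abs_F_le (V : ℝ → ℝ) (M : ℝ) (hM : ∀ x, |V x| ≤ M) (E' x y : ℝ) :
    |F V E' x y| ≤ 1 + M + |E'| := by
  have h1 : |cos y ^ 2| ≤ 1 := by
    rw [abs_pow]; exact pow_le_one₀ (abs_nonneg _) (abs_cos_le_one y)
  have h2 : |sin y ^ 2| ≤ 1 := by
    rw [abs_pow]; exact pow_le_one₀ (abs_nonneg _) (abs_sin_le_one y)
  have h3 : |E' - V x| ≤ |E'| + M := by
    calc |E' - V x| ≤ |E'| + |V x| := abs_sub _ _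
    _ ≤ |E'| + M := by linarith [hM x]
  calc |F V E' x y| ≤ |cos y ^ 2| + |E' - V x| * |sin y ^ 2| := by
        rw [F]; refine (abs_add_le _ _).trans ?_; rw [abs_mul]
    _ ≤ 1 + (|E'| + M) * 1 := by
        gcongr; exact (abs_nonneg _).trans h3
    _ = 1 + M + |E'| := by ring

lemma lipschitzWith_F (V : ℝ → ℝ) (M : ℝ) (hM : ∀ x, |V x| ≤ M) (E' x : ℝ) :
    LipschitzWith (Real.toNNReal (1 + M + |E'|)) (F V E' x) := by
  apply lipschitzWith_of_nnnorm_deriv_le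
    (fun y => (hasDerivAt_F V E' x y).differentiableAt)
  intro y
  rw [← NNReal.coe_le_coe, coe_nnnorm, Real.coe_toNNReal]
  · rw [(hasDerivAt_F V E' x y).deriv]
    have hs : |2 * sin y * cos y| ≤ 1 := by
      rw [show 2 * sin y * cos y = sin (2 * y) by rw [Real.sin_two_mul]]
      exact abs_sin_le_one _
    have h3 : |E' - V x - 1| ≤ 1 + M + |E'| := by
      have := hM x
      have h := abs_sub_abs_le_abs_sub (E' - V x) (1 : ℝ)
      have h2 : |E' - V x| ≤ |E'| + M := by
        calc |E' - V x| ≤ |E'| + |V x| := abs_sub _ _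
        _ ≤ |E'| + M := by linarith
      calc |E' - V x - 1| ≤ |E' - V x| + |(1:ℝ)| := abs_sub _ _
        _ ≤ 1 + M + |E'| := by rw [abs_one]; linarith
    calc |(E' - V x - 1) * (2 * sin y * cos y)| = |E' - V x - 1| * |2 * sin y * cos y| :=
          abs_mul _ _
      _ ≤ (1 + M + |E'|) * 1 := by
          gcongr
          exact (abs_nonneg _).trans h3
      _ = 1 + M + |E'| := mul_one _
  · have := hM 0
    have := abs_nonneg (V 0)
    have := abs_nonneg E'
    linarith



/-- Global existence for an ODE with globally Lipschitz, bounded right-hand side. -/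
lemma exists_global_solution (F : ℝ → ℝ → ℝ) (K : NNReal) (C : ℝ)
    (hlip : ∀ t, LipschitzWith K (fun y => F t y))
    (hcont : ∀ y, Continuous (fun t => F t y))
    (hbdd : ∀ t y, |F t y| ≤ C) :
    ∃ θ : ℝ → ℝ, θ 0 = 0 ∧ ∀ t, HasDerivAt θ (F t (θ t)) t := by
  have hC0 : 0 ≤ C := (abs_nonneg _).trans (hbdd 0 0)
  -- Picard-Lindelöf on each interval [-(n+1), n+1]
  have hex : ∀ n : ℕ, ∃ f : ℝ → ℝ, f 0 = 0 ∧
      (∀ t ∈ Icc (-(n+1) : ℝ) (n+1), HasDerivWithinAt f (F t (f t)) (Icc (-(n+1) : ℝ) (n+1)) t) := by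
    intro n
    have hn1 : (0:ℝ) ≤ (n:ℝ) + 1 := by positivity
    have ht0 : (0:ℝ) ∈ Icc (-((n:ℝ)+1)) ((n:ℝ)+1) := ⟨by linarith, hn1⟩
    have hpl : IsPicardLindelof (fun t y => F t y) (⟨0, ht0⟩ : Icc (-((n:ℝ)+1)) ((n:ℝ)+1)) 0
        ⟨C * ((n:ℝ)+1), by positivity⟩ 0 ⟨C, hC0⟩ K := by
      constructor
      · exact fun t _ => (hlip t).lipschitzOnWith
      · exact fun y _ => (hcont y).continuousOn
      · intro t _ y _
        rw [Real.norm_eq_abs]; exact hbdd t y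
      · have : max ((n:ℝ) + 1 - 0) (0 - -((n:ℝ)+1)) = (n:ℝ) + 1 := by
          rw [max_eq_left] <;> linarith
        simp only [NNReal.coe_mk, NNReal.coe_zero, sub_zero, tsub_zero] at this ⊢
        rw [this]
        exact le_rfl
    exact hpl.exists_eq_forall_mem_Icc_hasDerivWithinAt₀
  choose g hg0 hgd using hex
  -- interior derivative
  have hgd' : ∀ (n : ℕ) (t : ℝ), |t| < (n:ℝ) + 1 → HasDerivAt (g n) (F t (g n t)) t := by
    intro n t ht
    rw [abs_lt] at ht
    exact (hgd n t ⟨ht.1.le, ht.2.le⟩).hasDerivAt (Icc_mem_nhds ht.1 ht.2)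
  have hgc : ∀ n : ℕ, ContinuousOn (g n) (Icc (-(n+1) : ℝ) (n+1)) :=
    fun n t ht => (hgd n t ht).continuousWithinAt
  -- consistency
  have key : ∀ m n : ℕ, m ≤ n → ∀ s : ℝ, |s| ≤ (m:ℝ) + 1 → g m s = g n s := by
    intro m n hmn s hs
    have hmn' : (m:ℝ) ≤ (n:ℝ) := by exact_mod_cast hmn
    have h0 : (0:ℝ) ∈ Ioo (-(m+1) : ℝ) ((m:ℝ)+1) := by
      constructor
      · have : (0:ℝ) ≤ (m:ℝ) := Nat.cast_nonneg m
        linarith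
      · positivity
    have heq : EqOn (g m) (g n) (Icc (-(m+1) : ℝ) ((m:ℝ)+1)) := by
      apply ODE_solution_unique_of_mem_Icc
        (v := fun t y => F t y) (s := fun _ => (univ : Set ℝ)) (K := K)
        (fun t _ => (hlip t).lipschitzOnWith) h0
      · exact (hgc m).mono (Icc_subset_Icc (le_refl _) (le_refl _))
      · intro t ht
        apply hgd' m t
        rw [abs_lt]; exact ⟨ht.1, ht.2⟩
      · intro t _; trivial
      · exact (hgc n).mono (Icc_subset_Icc (by linarith) (by linarith))
      · intro t ht
        apply hgd' n t
        rw [abs_lt]; constructor <;> [linarith [ht.1]; linarith [ht.2]]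
      · intro t _; trivial
      · rw [hg0 m, hg0 n]
    apply heq
    rw [abs_le] at hs
    exact ⟨by linarith [hs.1], hs.2⟩
  have consist : ∀ m n : ℕ, ∀ s : ℝ, |s| ≤ (m:ℝ) + 1 → |s| ≤ (n:ℝ) + 1 → g m s = g n s := by
    intro m n s hm hn
    rcases le_total m n with h | h
    · exact key m n h s hm
    · exact (key n m h s hn).symm
  refine ⟨fun t => g ⌈|t|⌉₊ t, by simpa using hg0 0, ?_⟩
  intro t
  set n := ⌈|t|⌉₊ + 1 with hn
  have htn : |t| < (n:ℝ) + 1 := by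
    have := Nat.le_ceil |t|
    push_cast [hn]
    linarith
  have hev : (fun s => g ⌈|s|⌉₊ s) =ᶠ[nhds t] g n := by
    have hball : Metric.ball t ((n:ℝ) + 1 - |t|) ∈ nhds t :=
      Metric.ball_mem_nhds t (by linarith)
    filter_upwards [hball] with s hs
    have hsn : |s| ≤ (n:ℝ) + 1 := by
      have : |s - t| < (n:ℝ) + 1 - |t| := by
        rw [← Real.dist_eq]; exact hs
      have := abs_sub_abs_le_abs_sub s t
      linarith
    exact consist ⌈|s|⌉₊ n s (by linarith [Nat.le_ceil |s|]) hsn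
  have hder := hgd' n t htn
  have hEq : g n t = g ⌈|t|⌉₊ t :=
    consist n ⌈|t|⌉₊ t htn.le (by linarith [Nat.le_ceil |t|])
  have : g n t = (fun s => g ⌈|s|⌉₊ s) t := hEq
  rw [← this]
  exact hder.congr_of_eventuallyEq hev



/-- Uniqueness for the second-order linear ODE `u'' = (V - E')u` on `[0, b]` with data at `0`. -/
lemma second_order_unique (V : ℝ → ℝ) (M : ℝ) (hM : ∀ x, |V x| ≤ M) (E' b : ℝ)
    (p q : ℝ → ℝ)
    (hpc : ContDiff ℝ 2 p) (hqc : ContDiff ℝ 2 q)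
    (hpode : ∀ x ∈ Ico 0 b, deriv (deriv p) x = (V x - E') * p x)
    (hqode : ∀ x ∈ Ico 0 b, deriv (deriv q) x = (V x - E') * q x)
    (h1 : p 0 = q 0) (h2 : deriv p 0 = deriv q 0) :
    ∀ x ∈ Icc 0 b, p x = q x ∧ deriv p x = deriv q x := by
  have hM0 : 0 ≤ M := (abs_nonneg _).trans (hM 0)
  set K : NNReal := Real.toNNReal (1 + M + |E'|) with hK
  set G : ℝ → ℝ × ℝ → ℝ × ℝ := fun t z => (z.2, (V t - E') * z.1) with hG
  have hlip : ∀ t, LipschitzWith K (G t) := by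
    intro t
    apply LipschitzWith.of_dist_le_mul
    intro z w
    rw [Prod.dist_eq]
    have hc : |V t - E'| ≤ M + |E'| := by
      calc |V t - E'| ≤ |V t| + |E'| := abs_sub _ _
        _ ≤ M + |E'| := by linarith [hM t]
    have hK' : ((K : NNReal) : ℝ) = 1 + M + |E'| := by
      rw [hK, Real.coe_toNNReal]
      positivity
    have hd1 : dist z.1 w.1 ≤ dist z w := by rw [Prod.dist_eq]; exact le_max_left _ _
    have hd2 : dist z.2 w.2 ≤ dist z w := by rw [Prod.dist_eq]; exact le_max_right _ _
    have hfst : dist (G t z).1 (G t w).1 = dist z.2 w.2 := rfl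
    have hsnd : dist (G t z).2 (G t w).2 = |V t - E'| * dist z.1 w.1 := by
      simp only [hG, Real.dist_eq]
      rw [← abs_mul]
      ring_nf
    rw [hfst, hsnd]
    have hdnn : (0:ℝ) ≤ dist z w := dist_nonneg
    apply max_le
    · rw [hK']
      nlinarith [abs_nonneg E']
    · rw [hK']
      nlinarith [mul_le_mul hc hd1 dist_nonneg (by positivity : (0:ℝ) ≤ M + |E'|),
        abs_nonneg E']
  have hdp : Differentiable ℝ p := hpc.differentiable (by norm_num)
  have hdq : Differentiable ℝ q := hqc.differentiable (by norm_num)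
  have hdp' : Differentiable ℝ (deriv p) := by
    have h := (contDiff_succ_iff_deriv (n := 1)).mp (by exact_mod_cast hpc)
    exact h.2.2.differentiable one_ne_zero
  have hdq' : Differentiable ℝ (deriv q) := by
    have h := (contDiff_succ_iff_deriv (n := 1)).mp (by exact_mod_cast hqc)
    exact h.2.2.differentiable one_ne_zero
  set fp : ℝ → ℝ × ℝ := fun t => (p t, deriv p t) with hfp
  set fq : ℝ → ℝ × ℝ := fun t => (q t, deriv q t) with hfq
  have hfpc : ContinuousOn fp (Icc 0 b) :=
    (hdp.continuous.prodMk (hpc.continuous_deriv (by norm_num))).continuousOn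
  have hfqc : ContinuousOn fq (Icc 0 b) :=
    (hdq.continuous.prodMk (hqc.continuous_deriv (by norm_num))).continuousOn
  have hfpd : ∀ t ∈ Ico 0 b, HasDerivWithinAt fp (G t (fp t)) (Ici t) t := by
    intro t ht
    have h1' : HasDerivAt p (deriv p t) t := (hdp t).hasDerivAt
    have h2' : HasDerivAt (deriv p) (deriv (deriv p) t) t := (hdp' t).hasDerivAt
    have := h1'.prodMk h2'
    rw [hpode t ht] at this
    exact this.hasDerivWithinAt
  have hfqd : ∀ t ∈ Ico 0 b, HasDerivWithinAt fq (G t (fq t)) (Ici t) t := by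
    intro t ht
    have h1' : HasDerivAt q (deriv q t) t := (hdq t).hasDerivAt
    have h2' : HasDerivAt (deriv q) (deriv (deriv q) t) t := (hdq' t).hasDerivAt
    have := h1'.prodMk h2'
    rw [hqode t ht] at this
    exact this.hasDerivWithinAt
  have heq : EqOn fp fq (Icc 0 b) := by
    apply ODE_solution_unique_of_mem_Icc_right
      (v := G) (s := fun _ => (univ : Set (ℝ × ℝ))) (K := K)
      (fun t _ => (hlip t).lipschitzOnWith) hfpc hfpd (fun t _ => trivial)
      hfqc hfqd (fun t _ => trivial)
    rw [hfp, hfq]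
    simp only
    rw [h1, h2]
  intro x hx
  have := heq hx
  exact ⟨congrArg Prod.fst this, congrArg Prod.snd this⟩



lemma F_at_pi_mul (V : ℝ → ℝ) (E' x : ℝ) (k : ℤ) : F V E' x (k * π) = 1 := by
  have hs : sin ((k:ℝ) * π) = 0 := Real.sin_int_mul_pi k
  have hc : cos ((k:ℝ) * π) ^ 2 = 1 := by
    have := Real.sin_sq_add_cos_sq ((k:ℝ) * π)
    rw [hs] at this
    nlinarith
  rw [F, hs, hc]
  ring

/-- Crossing lemma: once the Prüfer angle reaches `k * π`, it stays strictly above. -/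
lemma crossing (V : ℝ → ℝ) (E' : ℝ) (θ : ℝ → ℝ)
    (hθd : ∀ x, HasDerivAt θ (F V E' x (θ x)) x) (k : ℤ) (c : ℝ) (hc : θ c = k * π) :
    ∀ x, c < x → (k:ℝ) * π < θ x := by
  have hθc : Continuous θ := cont_of_deriv hθd
  -- at any point where θ = kπ, the derivative is 1, so slope is eventually positive
  have hslope : ∀ t : ℝ, θ t = k * π →
      ∀ᶠ s in nhdsWithin t {t}ᶜ, 0 < slope θ t s := by
    intro t ht
    have hd : HasDerivAt θ 1 t := by
      have := hθd t
      rwa [ht, F_at_pi_mul] at this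
    have h := hasDerivAt_iff_tendsto_slope.mp hd
    exact h.eventually (eventually_gt_nhds one_pos)
  -- local strict increase to the right of a crossing point
  have hlocal : ∀ t : ℝ, θ t = k * π → ∃ ε > 0, ∀ s ∈ Ioo t (t + ε), (k:ℝ) * π < θ s := by
    intro t ht
    have h := hslope t ht
    rw [eventually_nhdsWithin_iff] at h
    rw [Metric.eventually_nhds_iff] at h
    obtain ⟨ε, hε, hh⟩ := h
    refine ⟨ε, hε, fun s hs => ?_⟩
    have hd : dist s t < ε := by
      rw [Real.dist_eq, abs_of_pos (by linarith [hs.1])]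
      linarith [hs.2]
    have hne : s ∈ ({t}ᶜ : Set ℝ) := by
      simp only [mem_compl_iff, mem_singleton_iff]
      intro hst; rw [hst] at hs; exact lt_irrefl t hs.1
    have := hh hd hne
    rw [slope_def_field] at this
    have hstpos : (0:ℝ) < s - t := by linarith [hs.1]
    have hpos : 0 < θ s - θ t := by
      have h3 := mul_pos this hstpos
      rwa [div_mul_cancel₀ _ (ne_of_gt hstpos)] at h3
    rw [ht] at hpos
    linarith
  intro x hx
  by_contra hcon
  push_neg at hcon
  obtain ⟨ε, hε, hloc⟩ := hlocal c hc
  set d := c + min ε (x - c) / 2 with hd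
  have hdc : c < d := by
    rw [hd]
    have : 0 < min ε (x - c) := lt_min hε (by linarith)
    linarith
  have hdε : d < c + ε := by
    rw [hd]
    have h1 : min ε (x - c) ≤ ε := min_le_left _ _
    linarith
  have hdx : d < x := by
    rw [hd]
    have h1 : min ε (x - c) ≤ x - c := min_le_right _ _
    linarith
  have hθd' : (k:ℝ) * π < θ d := hloc d ⟨hdc, hdε⟩
  set S := Icc d x ∩ {s | θ s ≤ (k:ℝ) * π} with hS
  have hSclosed : IsClosed S := isClosed_Icc.inter (isClosed_le hθc continuous_const)
  have hSne : S.Nonempty := ⟨x, ⟨hdx.le, le_refl x⟩, hcon⟩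
  have hSbdd : BddBelow S := ⟨d, fun s hs => hs.1.1⟩
  set t := sInf S with ht
  have htS : t ∈ S := hSclosed.csInf_mem hSne hSbdd
  have hdt : d ≤ t := htS.1.1
  have htx : t ≤ x := htS.1.2
  have hd_ne : d ≠ t := fun h => by rw [← h] at htS; exact absurd htS.2 (not_le.mpr hθd')
  have hdt' : d < t := lt_of_le_of_ne hdt hd_ne
  have hbelow : ∀ s ∈ Ico d t, (k:ℝ) * π < θ s := by
    intro s hs
    by_contra hle
    push_neg at hle
    have hsS : s ∈ S := ⟨⟨hs.1, hs.2.le.trans htx⟩, hle⟩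
    have := csInf_le hSbdd hsS
    exact absurd this (not_le.mpr hs.2)
  -- θ t = kπ by continuity from the left
  have htk : θ t = k * π := by
    have hge : (k:ℝ) * π ≤ θ t := by
      have hmem : t ∈ closure (Ico d t) := by
        rw [closure_Ico hd_ne]
        exact ⟨hdt, le_refl t⟩
      have h1 : θ t ∈ closure (θ '' Ico d t) :=
        (hθc.continuousWithinAt).mem_closure_image hmem
      have h2 : θ '' Ico d t ⊆ Ici ((k:ℝ) * π) := by
        rintro y ⟨s, hs, rfl⟩
        exact (hbelow s hs).le
      have h3 := closure_mono h2
      rw [isClosed_Ici.closure_eq] at h3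
      exact h3 h1
    exact le_antisymm htS.2 hge
  -- contradiction via left slope
  have h := hslope t htk
  rw [eventually_nhdsWithin_iff] at h
  rw [Metric.eventually_nhds_iff] at h
  obtain ⟨ε', hε', hh⟩ := h
  set s := max d (t - ε' / 2) with hs
  have hst : s < t := by
    rw [hs]
    apply max_lt hdt'
    linarith
  have hsd : d ≤ s := le_max_left _ _
  have hdist : dist s t < ε' := by
    rw [Real.dist_eq, abs_of_neg (by linarith)]
    have : t - ε' / 2 ≤ s := le_max_right _ _
    linarith
  have hne : s ∈ ({t}ᶜ : Set ℝ) := by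
    simp only [mem_compl_iff, mem_singleton_iff]
    exact fun h' => absurd h' (ne_of_lt hst)
  have hpos := hh hdist hne
  rw [slope_def_field] at hpos
  have hup : (k:ℝ) * π < θ s := hbelow s ⟨hsd, hst⟩
  have hnum : 0 < θ s - θ t := by rw [htk]; linarith
  have hden : s - t < 0 := by linarith
  have : (θ s - θ t) / (s - t) < 0 := div_neg_of_pos_of_neg hnum hden
  linarith



/-- Construction of the amplitude `ρ` so that `ρ sin θ` solves `u'' = (V - E')u`. -/
lemma exists_rho (V : ℝ → ℝ) (hVc : Continuous V) (E' : ℝ) (θ : ℝ → ℝ)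
    (hθd : ∀ x, HasDerivAt θ (F V E' x (θ x)) x) :
    ∃ ρ : ℝ → ℝ, (∀ x, 0 < ρ x) ∧ ρ 0 = 1 ∧
      (∀ x, HasDerivAt (fun y => ρ y * sin (θ y)) (ρ x * cos (θ x)) x) ∧
      (∀ x, HasDerivAt (fun y => ρ y * cos (θ y)) ((V x - E') * (ρ x * sin (θ x))) x) := by
  have hθc : Continuous θ := cont_of_deriv hθd
  set gg : ℝ → ℝ := fun t => sin (θ t) * cos (θ t) * (1 + V t - E') with hgg
  have hggc : Continuous gg := by
    apply Continuous.mul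
    · exact (Real.continuous_sin.comp hθc).mul (Real.continuous_cos.comp hθc)
    · continuity
  set I : ℝ → ℝ := fun x => ∫ t in (0:ℝ)..x, gg t with hI
  have hId : ∀ x, HasDerivAt I (gg x) x := by
    intro x
    apply intervalIntegral.integral_hasDerivAt_right
      (hggc.intervalIntegrable 0 x)
      (hggc.stronglyMeasurable.stronglyMeasurableAtFilter)
      hggc.continuousAt
  set ρ : ℝ → ℝ := fun x => Real.exp (I x) with hρ
  have hρd : ∀ x, HasDerivAt ρ (ρ x * gg x) x := fun x => (hId x).exp
  have hρpos : ∀ x, 0 < ρ x := fun x => Real.exp_pos _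
  have hρ0 : ρ 0 = 1 := by
    simp only [hρ, hI]
    rw [intervalIntegral.integral_same, Real.exp_zero]
  refine ⟨ρ, hρpos, hρ0, ?_, ?_⟩
  · intro x
    have hsin : HasDerivAt (fun y => sin (θ y)) (cos (θ x) * F V E' x (θ x)) x :=
      (Real.hasDerivAt_sin (θ x)).comp x (hθd x)
    have hW := (hρd x).mul hsin
    refine hW.congr_deriv (Eq.symm ?_)
    have hpyth : sin (θ x) ^ 2 + cos (θ x) ^ 2 = 1 := Real.sin_sq_add_cos_sq _
    simp only [hgg, F]
    linear_combination (-(ρ x * cos (θ x))) * hpyth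
  · intro x
    have hcos : HasDerivAt (fun y => cos (θ y)) (-sin (θ x) * F V E' x (θ x)) x :=
      (Real.hasDerivAt_cos (θ x)).comp x (hθd x)
    have hW := (hρd x).mul hcos
    refine hW.congr_deriv (Eq.symm ?_)
    have hpyth : sin (θ x) ^ 2 + cos (θ x) ^ 2 = 1 := Real.sin_sq_add_cos_sq _
    simp only [hgg, F]
    linear_combination (-((V x - E') * ρ x * sin (θ x))) * hpyth


lemma F_lip (V : ℝ → ℝ) (M : ℝ) (hM : ∀ x, |V x| ≤ M) (E' x y1 y2 : ℝ) :
    |F V E' x y2 - F V E' x y1| ≤ (1 + M + |E'|) * |y2 - y1| := by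
  have h := (lipschitzWith_F V M hM E' x).dist_le_mul y2 y1
  rw [Real.dist_eq, Real.dist_eq, Real.coe_toNNReal] at h
  · exact h
  · have := hM 0
    have := abs_nonneg (V 0)
    have := abs_nonneg E'
    linarith

lemma F_sub_E (V : ℝ → ℝ) (E1 E2 x y : ℝ) :
    F V E2 x y - F V E1 x y = (E2 - E1) * sin y ^ 2 := by
  rw [F, F]; ring

/-- Strict monotonicity of the Prüfer angle in the energy. -/
lemma theta_mono (V : ℝ → ℝ) (M : ℝ) (hM : ∀ x, |V x| ≤ M)
    (E1 E2 : ℝ) (hE : E1 < E2) (θ1 θ2 : ℝ → ℝ)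
    (hθ10 : θ1 0 = 0) (hθ1d : ∀ x, HasDerivAt θ1 (F V E1 x (θ1 x)) x)
    (hθ20 : θ2 0 = 0) (hθ2d : ∀ x, HasDerivAt θ2 (F V E2 x (θ2 x)) x)
    (a : ℝ) (ha : 0 < a) : θ1 a < θ2 a := by
  have hM0 : 0 ≤ M := (abs_nonneg _).trans (hM 0)
  set L : ℝ := 1 + M + max |E1| |E2| with hL
  have hL0 : 0 ≤ L := by
    have := abs_nonneg E1
    have := le_max_left |E1| |E2|
    rw [hL]; linarith
  have hlip1 : ∀ x y1 y2, |F V E1 x y2 - F V E1 x y1| ≤ L * |y2 - y1| := by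
    intro x y1 y2
    refine (F_lip V M hM E1 x y1 y2).trans ?_
    have h1 : |E1| ≤ max |E1| |E2| := le_max_left _ _
    have := abs_nonneg (y2 - y1)
    rw [hL]; nlinarith
  have hlip2 : ∀ x y1 y2, |F V E2 x y2 - F V E2 x y1| ≤ L * |y2 - y1| := by
    intro x y1 y2
    refine (F_lip V M hM E2 x y1 y2).trans ?_
    have h1 : |E2| ≤ max |E1| |E2| := le_max_right _ _
    have := abs_nonneg (y2 - y1)
    rw [hL]; nlinarith
  set φ : ℝ → ℝ := fun x => θ2 x - θ1 x with hφ
  have hφ0 : φ 0 = 0 := by rw [hφ]; simp [hθ10, hθ20]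
  have hφd : ∀ x, HasDerivAt φ (F V E2 x (θ2 x) - F V E1 x (θ1 x)) x :=
    fun x => (hθ2d x).sub (hθ1d x)
  have hφc : Continuous φ := (cont_of_deriv hθ2d).sub (cont_of_deriv hθ1d)
  -- Step 1: φ ≥ 0 on [0, ∞)
  have hnonneg : ∀ x, 0 ≤ x → 0 ≤ φ x := by
    intro x1 hx1
    by_contra hcon
    push_neg at hcon
    have hx1' : 0 < x1 := by
      rcases lt_or_eq_of_le hx1 with h | h
      · exact h
      · exfalso; rw [← h, hφ0] at hcon; exact lt_irrefl 0 hcon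
    set S := Icc 0 x1 ∩ {s | 0 ≤ φ s} with hS
    have hSclosed : IsClosed S := isClosed_Icc.inter (isClosed_le continuous_const hφc)
    have hSne : S.Nonempty := ⟨0, ⟨le_refl 0, hx1⟩, hφ0.ge⟩
    have hSbdd : BddAbove S := ⟨x1, fun s hs => hs.1.2⟩
    set x0 := sSup S with hx0
    have hx0S : x0 ∈ S := hSclosed.csSup_mem hSne hSbdd
    have hx0le : x0 ≤ x1 := hx0S.1.2
    have hx0ge : 0 ≤ x0 := hx0S.1.1
    have hx0ne : x0 ≠ x1 := by
      intro h
      rw [h] at hx0S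
      exact absurd hx0S.2 (not_le.mpr hcon)
    have hx0lt : x0 < x1 := lt_of_le_of_ne hx0le hx0ne
    have hneg : ∀ s ∈ Ioc x0 x1, φ s < 0 := by
      intro s hs
      by_contra hle
      push_neg at hle
      have hsS : s ∈ S := ⟨⟨hx0ge.trans hs.1.le, hs.2⟩, hle⟩
      exact absurd (le_csSup hSbdd hsS) (not_le.mpr hs.1)
    have hφx0 : φ x0 = 0 := by
      refine le_antisymm ?_ hx0S.2
      have hmem : x0 ∈ closure (Ioc x0 x1) := by
        rw [closure_Ioc (ne_of_lt hx0lt)]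
        exact ⟨le_refl _, hx0lt.le⟩
      have h1 : φ x0 ∈ closure (φ '' Ioc x0 x1) :=
        (hφc.continuousWithinAt).mem_closure_image hmem
      have h2 : φ '' Ioc x0 x1 ⊆ Iic 0 := by
        rintro y ⟨s, hs, rfl⟩
        exact (hneg s hs).le
      have h3 := closure_mono h2
      rw [isClosed_Iic.closure_eq] at h3
      exact h3 h1
    -- ψ := exp(-L s) * φ s is monotone on [x0, x1]
    set ψ : ℝ → ℝ := fun s => Real.exp (-L * s) * φ s with hψ
    have hψd : ∀ s, HasDerivAt ψ
        (Real.exp (-L * s) * (F V E2 s (θ2 s) - F V E1 s (θ1 s)) +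
          (Real.exp (-L * s) * -L) * φ s) s := by
      intro s
      have he : HasDerivAt (fun s => Real.exp (-L * s)) (Real.exp (-L * s) * -L) s := by
        have := ((hasDerivAt_id s).const_mul (-L)).exp
        simpa [mul_comm] using this
      have := he.mul (hφd s)
      refine this.congr_deriv (Eq.symm ?_)
      ring
    have hmono : MonotoneOn ψ (Icc x0 x1) := by
      apply monotoneOn_of_deriv_nonneg (convex_Icc x0 x1) (cont_of_deriv hψd).continuousOn
      · intro s _
        exact ((hψd s).differentiableAt).differentiableWithinAt
      · intro s hs
        rw [interior_Icc] at hs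
        rw [(hψd s).deriv]
        have hsneg : φ s < 0 := hneg s ⟨hs.1, hs.2.le⟩
        have hd : L * φ s ≤ F V E2 s (θ2 s) - F V E1 s (θ1 s) := by
          have hsplit : F V E2 s (θ2 s) - F V E1 s (θ1 s) =
              (F V E1 s (θ2 s) - F V E1 s (θ1 s)) + (E2 - E1) * sin (θ2 s) ^ 2 := by
            have := F_sub_E V E1 E2 s (θ2 s)
            linarith
          have h1 : -(L * |θ2 s - θ1 s|) ≤ F V E1 s (θ2 s) - F V E1 s (θ1 s) :=
            neg_le_of_abs_le (hlip1 s (θ1 s) (θ2 s))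
          have h2 : 0 ≤ (E2 - E1) * sin (θ2 s) ^ 2 := by
            apply mul_nonneg (by linarith) (sq_nonneg _)
          have h3 : |θ2 s - θ1 s| = -φ s := by
            rw [hφ, abs_of_neg hsneg]
          rw [h3] at h1
          linarith
        have hepos : 0 < Real.exp (-L * s) := Real.exp_pos _
        nlinarith
    have h1 := hmono ⟨le_refl x0, hx0lt.le⟩ ⟨hx0lt.le, le_refl x1⟩ hx0lt.le
    rw [hψ] at h1
    simp only at h1
    rw [hφx0, mul_zero] at h1
    have hepos : 0 < Real.exp (-L * x1) := Real.exp_pos _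
    nlinarith
  -- Step 2: strictness
  obtain ⟨δ, hδ0, hδ⟩ : ∃ δ > 0, ∀ s, |s - 0| < δ → |θ1 s - θ1 0| < π := by
    have h1 : ContinuousAt θ1 0 := (cont_of_deriv hθ1d).continuousAt
    obtain ⟨δ, hδ0, h⟩ := Metric.continuousAt_iff.mp h1 π Real.pi_pos
    exact ⟨δ, hδ0, fun s hs => by
      have := h (show dist s 0 < δ by rwa [Real.dist_eq])
      rwa [Real.dist_eq] at this⟩
  set d := min δ a / 2 with hd
  have hd0 : 0 < d := by
    rw [hd]; have := lt_min hδ0 ha; linarith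
  have hdδ : d < δ := by
    rw [hd]; have := min_le_left δ a; linarith
  have hda : d ≤ a := by
    rw [hd]; have := min_le_right δ a; linarith
  have hθ1pos : ∀ s, 0 < s → 0 < θ1 s := by
    intro s hs
    have := crossing V E1 θ1 hθ1d 0 0 (by rw [hθ10]; push_cast; ring) s hs
    push_cast at this
    linarith
  have hθ1small : ∀ s ∈ Icc (d/2) d, 0 < θ1 s ∧ θ1 s < π := by
    intro s hs
    constructor
    · exact hθ1pos s (by linarith [hs.1])
    · have : |s - 0| < δ := by
        rw [sub_zero, abs_of_pos (by linarith [hs.1])]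
        linarith [hs.2]
      have := hδ s this
      rw [hθ10, sub_zero] at this
      exact lt_of_le_of_lt (le_abs_self _) this
  -- minimum of sin (θ1 s) on [d/2, d]
  obtain ⟨s₀, hs₀, hmin⟩ := isCompact_Icc.exists_isMinOn (α := ℝ)
    (Set.nonempty_Icc.mpr (by linarith : d/2 ≤ d))
    ((Real.continuous_sin.comp (cont_of_deriv hθ1d)).continuousOn)
  set c := sin (θ1 s₀) with hc
  have hc0 : 0 < c := by
    obtain ⟨h1, h2⟩ := hθ1small s₀ hs₀
    exact Real.sin_pos_of_pos_of_lt_pi h1 h2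
  have hsin_ge : ∀ s ∈ Icc (d/2) d, c ≤ sin (θ1 s) := fun s hs => hmin hs
  -- ψ := exp(L s) * φ s
  set ψ : ℝ → ℝ := fun s => Real.exp (L * s) * φ s with hψ
  have hψd : ∀ s, HasDerivAt ψ
      (Real.exp (L * s) * (F V E2 s (θ2 s) - F V E1 s (θ1 s)) +
        (Real.exp (L * s) * L) * φ s) s := by
    intro s
    have he : HasDerivAt (fun s => Real.exp (L * s)) (Real.exp (L * s) * L) s := by
      have := ((hasDerivAt_id s).const_mul L).exp
      simpa [mul_comm] using this
    have := he.mul (hφd s)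
    refine this.congr_deriv (Eq.symm ?_)
    ring
  have hkey : ∀ s, 0 ≤ s →
      Real.exp (L * s) * ((E2 - E1) * sin (θ1 s) ^ 2) ≤
        Real.exp (L * s) * (F V E2 s (θ2 s) - F V E1 s (θ1 s)) +
          (Real.exp (L * s) * L) * φ s := by
    intro s hs
    have hsplit : F V E2 s (θ2 s) - F V E1 s (θ1 s) =
        (F V E2 s (θ2 s) - F V E2 s (θ1 s)) + (E2 - E1) * sin (θ1 s) ^ 2 := by
      have := F_sub_E V E1 E2 s (θ1 s)
      linarith
    have h1 : -(L * |θ2 s - θ1 s|) ≤ F V E2 s (θ2 s) - F V E2 s (θ1 s) :=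
      neg_le_of_abs_le (hlip2 s (θ1 s) (θ2 s))
    have h2 : |θ2 s - θ1 s| = φ s := abs_of_nonneg (hnonneg s hs)
    rw [h2] at h1
    have hepos : 0 < Real.exp (L * s) := Real.exp_pos _
    nlinarith
  have hψmono : MonotoneOn ψ (Icc 0 a) := by
    apply monotoneOn_of_deriv_nonneg (convex_Icc 0 a) (cont_of_deriv hψd).continuousOn
    · intro s _
      exact ((hψd s).differentiableAt).differentiableWithinAt
    · intro s hs
      rw [interior_Icc] at hs
      rw [(hψd s).deriv]
      have h1 := hkey s hs.1.le
      have hepos : 0 < Real.exp (L * s) := Real.exp_pos _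
      have h5 : 0 ≤ Real.exp (L * s) * ((E2 - E1) * sin (θ1 s) ^ 2) :=
        mul_nonneg hepos.le (mul_nonneg (by linarith) (sq_nonneg _))
      linarith
  -- χ := ψ - (E2-E1) c² s is monotone on [d/2, d]
  have hlin : ∀ s : ℝ, HasDerivAt (fun s : ℝ => (E2 - E1) * c^2 * s) ((E2 - E1) * c^2) s := by
    intro s
    simpa using (hasDerivAt_id s).const_mul ((E2 - E1) * c^2)
  have hχd : ∀ s, HasDerivAt (fun s => ψ s - (E2 - E1) * c^2 * s)
      ((Real.exp (L * s) * (F V E2 s (θ2 s) - F V E1 s (θ1 s)) +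
        (Real.exp (L * s) * L) * φ s) - (E2 - E1) * c^2) s :=
    fun s => (hψd s).sub (hlin s)
  have hχmono : MonotoneOn (fun s => ψ s - (E2 - E1) * c^2 * s) (Icc (d/2) d) := by
    apply monotoneOn_of_deriv_nonneg (convex_Icc (d/2) d) (cont_of_deriv hχd).continuousOn
    · intro s _
      exact ((hχd s).differentiableAt).differentiableWithinAt
    · intro s hs
      rw [interior_Icc] at hs
      rw [(hχd s).deriv]
      have hs0 : (0:ℝ) ≤ s := by linarith [hs.1, hd0]
      have h1 := hkey s hs0
      have h2 : c ≤ sin (θ1 s) := hsin_ge s ⟨hs.1.le, hs.2.le⟩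
      have h4 : (1:ℝ) ≤ Real.exp (L * s) := by
        rw [← Real.exp_zero]
        apply Real.exp_le_exp.mpr
        nlinarith
      have h5 : (E2 - E1) * c^2 ≤ (E2 - E1) * sin (θ1 s)^2 := by
        nlinarith [mul_nonneg (mul_nonneg (sub_nonneg.mpr h2)
          (by linarith : (0:ℝ) ≤ sin (θ1 s) + c)) (by linarith : (0:ℝ) ≤ E2 - E1)]
      have h6 : (E2 - E1) * sin (θ1 s)^2 ≤ Real.exp (L * s) * ((E2 - E1) * sin (θ1 s)^2) :=
        le_mul_of_one_le_left (mul_nonneg (by linarith) (sq_nonneg _)) h4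
      linarith
  have hstep : ψ (d/2) + (E2 - E1) * c^2 * (d/2) ≤ ψ d := by
    have h := hχmono (show d/2 ∈ Icc (d/2) d from ⟨le_refl _, by linarith⟩)
      (show d ∈ Icc (d/2) d from ⟨by linarith, le_refl d⟩) (by linarith)
    simp only at h
    linarith
  have h0d2 : ψ 0 ≤ ψ (d/2) :=
    hψmono ⟨le_refl 0, by linarith⟩ ⟨by linarith, by linarith⟩ (by linarith)
  have hda' : ψ d ≤ ψ a := hψmono ⟨by linarith, hda⟩ ⟨ha.le, le_refl a⟩ hda
  have hψ0 : ψ 0 = 0 := by rw [hψ]; simp only; rw [hφ0, mul_zero]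
  have hψa_pos : 0 < ψ a := by
    have hq : 0 < (E2 - E1) * c^2 * (d/2) := by
      apply mul_pos (mul_pos (by linarith) (by positivity)) (by linarith)
    rw [hψ0] at h0d2
    linarith
  have hepos : 0 < Real.exp (L * a) := Real.exp_pos _
  have hφa : 0 < φ a := by
    by_contra hcon
    push_neg at hcon
    have h7 : Real.exp (L * a) * φ a ≤ 0 := mul_nonpos_of_nonneg_of_nonpos hepos.le hcon
    have h8 : ψ a = Real.exp (L * a) * φ a := by rw [hψ]
    linarith
  have : θ2 a - θ1 a > 0 := by
    have h9 : φ a = θ2 a - θ1 a := by rw [hφ]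
    linarith
  linarith
/-- Continuity of the Prüfer angle in the energy parameter, via Grönwall. -/
lemma theta_param_bound (V : ℝ → ℝ) (M : ℝ) (hM : ∀ x, |V x| ≤ M)
    (E1 E2 B : ℝ) (hB2 : |E2| ≤ B)
    (θ1 θ2 : ℝ → ℝ) (hθ10 : θ1 0 = 0) (hθ1d : ∀ x, HasDerivAt θ1 (F V E1 x (θ1 x)) x)
    (hθ20 : θ2 0 = 0) (hθ2d : ∀ x, HasDerivAt θ2 (F V E2 x (θ2 x)) x)
    (a : ℝ) (ha : 0 ≤ a) :
    |θ2 a - θ1 a| ≤ gronwallBound 0 (1 + M + B) |E2 - E1| a := by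
  have hbound := norm_le_gronwallBound_of_norm_deriv_right_le (E := ℝ)
    (f := fun x => θ2 x - θ1 x)
    (f' := fun x => F V E2 x (θ2 x) - F V E1 x (θ1 x))
    (δ := 0) (K := 1 + M + B) (ε := |E2 - E1|) (a := 0) (b := a)
    (((cont_of_deriv hθ2d).sub (cont_of_deriv hθ1d)).continuousOn)
    (fun x _ => ((hθ2d x).sub (hθ1d x)).hasDerivWithinAt)
    (by simp [hθ10, hθ20])
    ?_ a ⟨ha, le_refl a⟩
  · simpa using hbound
  · intro x _
    rw [Real.norm_eq_abs, Real.norm_eq_abs]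
    have hsplit : F V E2 x (θ2 x) - F V E1 x (θ1 x) =
        (F V E2 x (θ2 x) - F V E2 x (θ1 x)) + (E2 - E1) * sin (θ1 x) ^ 2 := by
      have := F_sub_E V E1 E2 x (θ1 x)
      linarith
    have h1 : |F V E2 x (θ2 x) - F V E2 x (θ1 x)| ≤ (1 + M + |E2|) * |θ2 x - θ1 x| :=
      F_lip V M hM E2 x (θ1 x) (θ2 x)
    have h2 : |(E2 - E1) * sin (θ1 x) ^ 2| ≤ |E2 - E1| := by
      rw [abs_mul, abs_pow]
      have hs : |sin (θ1 x)| ≤ 1 := abs_sin_le_one _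
      nlinarith [abs_nonneg (E2 - E1), abs_nonneg (sin (θ1 x)),
        pow_le_one₀ (n := 2) (abs_nonneg (sin (θ1 x))) hs]
    have h3 : (1 + M + |E2|) * |θ2 x - θ1 x| ≤ (1 + M + B) * |θ2 x - θ1 x| := by
      have := abs_nonneg (θ2 x - θ1 x)
      nlinarith
    calc |F V E2 x (θ2 x) - F V E1 x (θ1 x)|
        ≤ |F V E2 x (θ2 x) - F V E2 x (θ1 x)| + |(E2 - E1) * sin (θ1 x) ^ 2| := by
          rw [hsplit]; exact abs_add_le _ _
      _ ≤ (1 + M + B) * |θ2 x - θ1 x| + |E2 - E1| := by linarith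

lemma theta_param_continuousOn (V : ℝ → ℝ) (M : ℝ) (hM : ∀ x, |V x| ≤ M)
    (Θ : ℝ → ℝ → ℝ) (hΘ0 : ∀ E', Θ E' 0 = 0)
    (hΘd : ∀ E' x, HasDerivAt (Θ E') (F V E' x (Θ E' x)) x)
    (a B : ℝ) (ha : 0 ≤ a) :
    ContinuousOn (fun E' => Θ E' a) (Icc (-B) B) := by
  rw [Metric.continuousOn_iff]
  intro E1 hE1 ε hε
  set K := 1 + M + B with hK
  have hgb : ContinuousAt (fun e => gronwallBound 0 K e a) 0 :=
    (gronwallBound_continuous_ε 0 K a).continuousAt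
  rw [Metric.continuousAt_iff] at hgb
  obtain ⟨η, hη0, hη⟩ := hgb ε hε
  refine ⟨η, hη0, fun E2 hE2 hdist => ?_⟩
  have hB2 : |E2| ≤ B := abs_le.mpr ⟨hE2.1, hE2.2⟩
  have hb := theta_param_bound V M hM E1 E2 B hB2
    (Θ E1) (Θ E2) (hΘ0 E1) (hΘd E1) (hΘ0 E2) (hΘd E2) a ha
  have hd : dist (|E2 - E1|) 0 < η := by
    rw [Real.dist_eq, sub_zero, abs_abs]
    rwa [Real.dist_eq] at hdist
  have := hη hd
  rw [Real.dist_eq, gronwallBound_ε0_δ0, sub_zero] at this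
  rw [Real.dist_eq]
  calc |Θ E2 a - Θ E1 a| ≤ gronwallBound 0 K (|E2 - E1|) a := hb
    _ ≤ |gronwallBound 0 K (|E2 - E1|) a| := le_abs_self _
    _ < ε := this

/-- Local positivity to the right of a point with positive derivative. -/
lemma pos_right_of_deriv_pos {f : ℝ → ℝ} {c m : ℝ} (hd : HasDerivAt f m c) (hm : 0 < m) :
    ∃ ε > 0, ∀ s ∈ Ioo c (c + ε), f c < f s := by
  have h := hasDerivAt_iff_tendsto_slope.mp hd
  have h2 : ∀ᶠ s in nhdsWithin c {c}ᶜ, 0 < slope f c s := h.eventually (eventually_gt_nhds hm)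
  rw [eventually_nhdsWithin_iff] at h2
  rw [Metric.eventually_nhds_iff] at h2
  obtain ⟨ε, hε, hh⟩ := h2
  refine ⟨ε, hε, fun s hs => ?_⟩
  have hdist : dist s c < ε := by
    rw [Real.dist_eq, abs_of_pos (by linarith [hs.1])]
    linarith [hs.2]
  have hne : s ∈ ({c}ᶜ : Set ℝ) := by
    simp only [mem_compl_iff, mem_singleton_iff]
    intro h'; rw [h'] at hs; exact lt_irrefl c hs.1
  have hsl := hh hdist hne
  rw [slope_def_field] at hsl
  have hscpos : (0:ℝ) < s - c := by linarith [hs.1]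
  have hmul := mul_pos hsl hscpos
  rw [div_mul_cancel₀ _ (ne_of_gt hscpos)] at hmul
  linarith

/-- For very negative energy, `ρ sin θ` stays positive on `(0, ∞)`, hence `θ a < π`. -/
lemma theta_lt_pi (V : ℝ → ℝ) (M : ℝ) (hM : ∀ x, |V x| ≤ M)
    (E' : ℝ) (hE' : E' ≤ -M - 1) (θ ρ : ℝ → ℝ)
    (hθ0 : θ 0 = 0) (hθd : ∀ x, HasDerivAt θ (F V E' x (θ x)) x)
    (hρpos : ∀ x, 0 < ρ x) (hρ0 : ρ 0 = 1)
    (hW1 : ∀ x, HasDerivAt (fun y => ρ y * sin (θ y)) (ρ x * cos (θ x)) x)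
    (hW2 : ∀ x, HasDerivAt (fun y => ρ y * cos (θ y)) ((V x - E') * (ρ x * sin (θ x))) x)
    (a : ℝ) (ha : 0 < a) : θ a < π := by
  set W : ℝ → ℝ := fun x => ρ x * sin (θ x) with hW
  set W' : ℝ → ℝ := fun x => ρ x * cos (θ x) with hW'
  have hW0 : W 0 = 0 := by rw [hW]; simp [hθ0]
  have hW'0 : W' 0 = 1 := by rw [hW']; simp [hθ0, hρ0]
  have hWc : Continuous W := cont_of_deriv hW1
  have hW'c : Continuous W' := cont_of_deriv hW2
  -- W > 0 on (0, ∞)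
  have hWpos : ∀ x, 0 < x → 0 < W x := by
    intro x1 hx1
    by_contra hcon
    push_neg at hcon
    -- initial positivity from W'(0) = 1
    have hd0 : HasDerivAt W 1 0 := by
      have := hW1 0
      rwa [show ρ 0 * cos (θ 0) = 1 by simp [hθ0, hρ0]] at this
    obtain ⟨ε, hε0, hloc⟩ := pos_right_of_deriv_pos hd0 one_pos
    set e := min ε x1 / 2 with he
    have he0 : 0 < e := by rw [he]; have := lt_min hε0 hx1; linarith
    have heε : e < ε := by rw [he]; have := min_le_left ε x1; linarith
    have hex1 : e < x1 := by rw [he]; have := min_le_right ε x1; linarith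
    have hWe : 0 < W e := by
      have := hloc e ⟨he0, by linarith⟩
      rwa [hW0] at this
    have hWpos_init : ∀ s, 0 < s → s ≤ e → 0 < W s := by
      intro s hs1 hs2
      have := hloc s ⟨hs1, by linarith⟩
      rwa [hW0] at this
    set S := Icc e x1 ∩ {s | W s ≤ 0} with hS
    have hSclosed : IsClosed S := isClosed_Icc.inter (isClosed_le hWc continuous_const)
    have hSne : S.Nonempty := ⟨x1, ⟨hex1.le, le_refl _⟩, hcon⟩
    have hSbdd : BddBelow S := ⟨e, fun s hs => hs.1.1⟩
    set t := sInf S with ht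
    have htS : t ∈ S := hSclosed.csInf_mem hSne hSbdd
    have hte : e ≤ t := htS.1.1
    have htx1 : t ≤ x1 := htS.1.2
    have hWtle : W t ≤ 0 := htS.2
    have hte' : e < t := by
      rcases lt_or_eq_of_le hte with h | h
      · exact h
      · exfalso; rw [← h] at hWtle; linarith
    have hWbet : ∀ s, 0 < s → s < t → 0 < W s := by
      intro s hs1 hs2
      rcases le_or_gt s e with h | h
      · exact hWpos_init s hs1 h
      · by_contra hle
        push_neg at hle
        have hsS : s ∈ S := ⟨⟨h.le, hs2.le.trans htx1⟩, hle⟩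
        exact absurd (csInf_le hSbdd hsS) (not_le.mpr hs2)
    have hWt : W t = 0 := by
      refine le_antisymm hWtle ?_
      have hmem : t ∈ closure (Ioo 0 t) := by
        rw [closure_Ioo (by linarith : (0:ℝ) ≠ t)]
        constructor <;> [linarith; exact le_refl t]
      have h1 : W t ∈ closure (W '' Ioo 0 t) :=
        (hWc.continuousWithinAt).mem_closure_image hmem
      have h2 : W '' Ioo 0 t ⊆ Ici 0 := by
        rintro y ⟨s, hs, rfl⟩
        exact (hWbet s hs.1 hs.2).le
      have h3 := closure_mono h2
      rw [isClosed_Ici.closure_eq] at h3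
      exact h3 h1
    have ht0 : 0 < t := by linarith
    -- W ≥ 0 on [0,t], so W'' ≥ 0, so W' ≥ 1, so W t ≥ t > 0: contradiction
    have hW'mono : MonotoneOn W' (Icc 0 t) := by
      apply monotoneOn_of_deriv_nonneg (convex_Icc 0 t) hW'c.continuousOn
      · intro s _
        exact (hW2 s).differentiableAt.differentiableWithinAt
      · intro s hs
        rw [interior_Icc] at hs
        rw [(hW2 s).deriv]
        have hV : 1 ≤ V s - E' := by have := hM s; have := neg_abs_le (V s); linarith
        have hWs : 0 ≤ W s := (hWbet s hs.1 hs.2).le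
        have : (0:ℝ) ≤ ρ s * sin (θ s) := hWs
        nlinarith
    have hW'ge : ∀ s ∈ Icc 0 t, 1 ≤ W' s := by
      intro s hs
      have := hW'mono ⟨le_refl 0, ht0.le⟩ hs hs.1
      rwa [hW'0] at this
    have hWid : MonotoneOn (fun s => W s - s) (Icc 0 t) := by
      apply monotoneOn_of_deriv_nonneg (convex_Icc 0 t)
        ((hWc.sub continuous_id).continuousOn)
      · intro s _
        exact ((hW1 s).sub (hasDerivAt_id s)).differentiableAt.differentiableWithinAt
      · intro s hs
        rw [interior_Icc] at hs
        rw [((hW1 s).sub (hasDerivAt_id s)).deriv]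
        have := hW'ge s ⟨hs.1.le, hs.2.le⟩
        have hW's : W' s = ρ s * cos (θ s) := rfl
        rw [← hW's]
        linarith
    have := hWid ⟨le_refl 0, ht0.le⟩ ⟨ht0.le, le_refl t⟩ ht0.le
    simp only at this
    rw [hW0] at this
    -- W t - t ≥ 0 - 0 = 0, so 0 = W t ≥ t > 0
    rw [hWt] at this
    linarith
  -- now θ a < π
  by_contra hcon
  push_neg at hcon
  have hθc : Continuous θ := cont_of_deriv hθd
  have hmem : π ∈ Icc (θ 0) (θ a) := by
    rw [hθ0]
    exact ⟨Real.pi_pos.le, hcon⟩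
  obtain ⟨y, hy, hθy⟩ := intermediate_value_Icc ha.le hθc.continuousOn hmem
  have hy0 : 0 < y := by
    rcases lt_or_eq_of_le hy.1 with h | h
    · exact h
    · exfalso
      have hπ : θ 0 = π := by rw [h]; exact hθy
      rw [hθ0] at hπ
      exact Real.pi_ne_zero hπ.symm
  have hfin := hWpos y hy0
  have : W y = ρ y * sin (θ y) := rfl
  rw [this, hθy, Real.sin_pi, mul_zero] at hfin
  exact lt_irrefl 0 hfin

/-- For each energy there is a Prüfer angle and amplitude. -/
lemma exists_package (V : ℝ → ℝ) (M : ℝ) (hM : ∀ x, |V x| ≤ M) (hVc : Continuous V) (E' : ℝ) :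
    ∃ θ ρ : ℝ → ℝ, θ 0 = 0 ∧ (∀ x, HasDerivAt θ (F V E' x (θ x)) x) ∧
      (∀ x, 0 < ρ x) ∧ ρ 0 = 1 ∧
      (∀ x, HasDerivAt (fun y => ρ y * sin (θ y)) (ρ x * cos (θ x)) x) ∧
      (∀ x, HasDerivAt (fun y => ρ y * cos (θ y)) ((V x - E') * (ρ x * sin (θ x))) x) := by
  obtain ⟨θ, hθ0, hθd⟩ := exists_global_solution (fun x y => F V E' x y)
    (Real.toNNReal (1 + M + |E'|)) (1 + M + |E'|)
    (fun t => lipschitzWith_F V M hM E' t)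
    (fun y => by
      have : Continuous (fun t => cos y ^ 2 + (E' - V t) * sin y ^ 2) := by
        apply Continuous.add continuous_const
        exact (continuous_const.sub hVc).mul continuous_const
      exact this)
    (fun t y => abs_F_le V M hM E' t y)
  obtain ⟨ρ, hρpos, hρ0, hW1, hW2⟩ := exists_rho V hVc E' θ hθd
  exact ⟨θ, ρ, hθ0, hθd, hρpos, hρ0, hW1, hW2⟩

/-- Regularity and `deriv` identities for `W = ρ sin θ`. -/
lemma W_regular (V : ℝ → ℝ) (E' : ℝ) (θ ρ : ℝ → ℝ)
    (hW1 : ∀ x, HasDerivAt (fun y => ρ y * sin (θ y)) (ρ x * cos (θ x)) x)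
    (hW2 : ∀ x, HasDerivAt (fun y => ρ y * cos (θ y)) ((V x - E') * (ρ x * sin (θ x))) x)
    (hVc : Continuous V) :
    ContDiff ℝ 2 (fun x => ρ x * sin (θ x)) ∧
      (∀ x, deriv (fun y => ρ y * sin (θ y)) x = ρ x * cos (θ x)) ∧
      (∀ x, deriv (deriv (fun y => ρ y * sin (θ y))) x =
        (V x - E') * (ρ x * sin (θ x))) := by
  have hd1 : deriv (fun y => ρ y * sin (θ y)) = fun x => ρ x * cos (θ x) :=
    funext fun x => (hW1 x).deriv
  have hd2 : ∀ x, deriv (deriv (fun y => ρ y * sin (θ y))) x =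
      (V x - E') * (ρ x * sin (θ x)) := by
    intro x
    rw [hd1]
    exact (hW2 x).deriv
  have hWc : Continuous (fun x => ρ x * sin (θ x)) := cont_of_deriv hW1
  have h1 : ContDiff ℝ 1 (deriv (fun y => ρ y * sin (θ y))) := by
    rw [hd1]
    rw [contDiff_one_iff_deriv]
    constructor
    · exact fun x => (hW2 x).differentiableAt
    · have heq : deriv (fun y => ρ y * cos (θ y)) =
          fun x => (V x - E') * (ρ x * sin (θ x)) := funext fun x => (hW2 x).deriv
      rw [heq]
      exact ((hVc.sub continuous_const).mul hWc)
  have h2 : ContDiff ℝ (1 + 1) (fun x => ρ x * sin (θ x)) := by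
    rw [contDiff_succ_iff_deriv]
    refine ⟨fun x => (hW1 x).differentiableAt, ?_, h1⟩
    intro h
    simp at h
  refine ⟨?_, fun x => by rw [hd1], hd2⟩
  convert h2 using 2
  norm_num

/-- Characterization: `E'` is a Dirichlet eigenvalue iff `sin (θ a) = 0`. -/
lemma eigenvalue_iff (V : ℝ → ℝ) (M : ℝ) (hM : ∀ x, |V x| ≤ M) (hVc : Continuous V)
    (a : ℝ) (ha : 0 < a) (E' : ℝ) (θ ρ : ℝ → ℝ)
    (hθ0 : θ 0 = 0) (hθd : ∀ x, HasDerivAt θ (F V E' x (θ x)) x)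
    (hρpos : ∀ x, 0 < ρ x) (hρ0 : ρ 0 = 1)
    (hW1 : ∀ x, HasDerivAt (fun y => ρ y * sin (θ y)) (ρ x * cos (θ x)) x)
    (hW2 : ∀ x, HasDerivAt (fun y => ρ y * cos (θ y)) ((V x - E') * (ρ x * sin (θ x))) x) :
    IsDirichletEigenvalue V a E' ↔ sin (θ a) = 0 := by
  obtain ⟨hWc2, hWd1, hWd2⟩ := W_regular V E' θ ρ hW1 hW2 hVc
  have hW0 : ρ 0 * sin (θ 0) = 0 := by rw [hθ0, Real.sin_zero, mul_zero]
  have hWd10 : deriv (fun y => ρ y * sin (θ y)) 0 = 1 := by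
    rw [hWd1 0, hθ0, Real.cos_zero, hρ0, one_mul]
  constructor
  · rintro ⟨v, hv2, hvode, ⟨xv, hxv, hvne⟩, hv0, hva⟩
    by_cases hc : deriv v 0 = 0
    · exfalso
      have huniq := second_order_unique V M hM E' a v (fun _ => (0:ℝ)) hv2 contDiff_const
        (fun x hx => hvode x ⟨hx.1, hx.2.le⟩)
        (fun x _ => by simp)
        (by simpa using hv0)
        (by simpa using hc)
      have := (huniq xv hxv).1
      exact hvne this
    · set c := deriv v 0 with hcdef
      set q : ℝ → ℝ := fun x => c * (ρ x * sin (θ x)) with hq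
      have hq2 : ContDiff ℝ 2 q := contDiff_const.mul hWc2
      have hqd1 : deriv q = fun x => c * (ρ x * cos (θ x)) := by
        funext x
        rw [hq]
        rw [deriv_const_mul c (hW1 x).differentiableAt, hWd1]
      have hqode : ∀ x ∈ Ico 0 a, deriv (deriv q) x = (V x - E') * q x := by
        intro x _
        rw [hqd1]
        rw [deriv_const_mul c (hW2 x).differentiableAt]
        have : deriv (fun y => ρ y * cos (θ y)) x = (V x - E') * (ρ x * sin (θ x)) :=
          (hW2 x).deriv
        rw [this, hq]
        ring
      have huniq := second_order_unique V M hM E' a v q hv2 hq2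
        (fun x hx => hvode x ⟨hx.1, hx.2.le⟩) hqode
        (by rw [hv0, hq]; simp [hW0])
        (by rw [hqd1]; simp only; rw [hθ0, Real.cos_zero, hρ0]; ring)
      have hva' := (huniq a ⟨ha.le, le_refl a⟩).1
      rw [hva, hq] at hva'
      have := hva'.symm
      rcases mul_eq_zero.mp this with h | h
      · exact absurd h hc
      · rcases mul_eq_zero.mp h with h' | h'
        · exact absurd h' (ne_of_gt (hρpos a))
        · exact h'
  · intro hsin
    -- witness point where W ≠ 0
    have hθc : Continuous θ := cont_of_deriv hθd
    obtain ⟨δ, hδ0, hδ⟩ : ∃ δ > 0, ∀ s, |s| < δ → |θ s| < π := by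
      obtain ⟨δ, hδ0, h⟩ := Metric.continuousAt_iff.mp hθc.continuousAt π Real.pi_pos
      refine ⟨δ, hδ0, fun s hs => ?_⟩
      have := h (show dist s 0 < δ by rwa [Real.dist_eq, sub_zero])
      rwa [Real.dist_eq, hθ0, sub_zero] at this
    set x0 := min (δ/2) (a/2) with hx0
    have hx0pos : 0 < x0 := lt_min (by linarith) (by linarith)
    have hx0a : x0 ≤ a := (min_le_right _ _).trans (by linarith)
    have hx0δ : x0 < δ := (min_le_left _ _).trans_lt (by linarith)
    have hθx0pos : 0 < θ x0 := by
      have := crossing V E' θ hθd 0 0 (by rw [hθ0]; push_cast; ring) x0 hx0pos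
      push_cast at this
      linarith
    have hθx0pi : θ x0 < π := by
      have := hδ x0 (by rwa [abs_of_pos hx0pos])
      exact lt_of_le_of_lt (le_abs_self _) this
    have hsinx0 : 0 < sin (θ x0) := Real.sin_pos_of_pos_of_lt_pi hθx0pos hθx0pi
    refine ⟨fun x => ρ x * sin (θ x), hWc2, fun x _ => hWd2 x, ⟨x0, ⟨hx0pos.le, hx0a⟩, ?_⟩,
      hW0, by simp only; rw [hsin, mul_zero]⟩
    exact ne_of_gt (mul_pos (hρpos x0) hsinx0)

end SturmAux
end

/-- **Sturm Oscillation Theorem.** For bounded continuous `V`, `a > 0`, `E ∈ ℝ`: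
the set of Dirichlet eigenvalues on `[0,a]` below `E` is finite, the set of zeros of `u(·,E)`
in `(0,a)` is finite, and the two sets have the same cardinality. Here `u` is the solution of
`−u″ + Vu = Eu` with `u(0) = 0`, `u′(0) = 1`. -/
theorem sturm_oscillation (V : ℝ → ℝ) (hVb : ∃ M, ∀ x, |V x| ≤ M) (hVc : Continuous V)
    (a : ℝ) (ha : 0 < a) (E : ℝ) (u : ℝ → ℝ) (hu : ContDiff ℝ 2 u)
    (hode : ∀ x, deriv (deriv u) x = (V x - E) * u x)
    (h0 : u 0 = 0) (h0' : deriv u 0 = 1) :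
    {E' : ℝ | IsDirichletEigenvalue V a E' ∧ E' < E}.Finite ∧
    {x ∈ Ioo 0 a | u x = 0}.Finite ∧
    {E' : ℝ | IsDirichletEigenvalue V a E' ∧ E' < E}.ncard =
      {x ∈ Ioo 0 a | u x = 0}.ncard := by
  classical
  obtain ⟨M, hM⟩ := hVb
  have hpack := fun E' => SturmAux.exists_package V M hM hVc E'
  choose Θ Ρ hΘ0 hΘd hΡpos hΡ0 hW1 hW2 using hpack
  obtain ⟨hWc2, hWd1, hWd2⟩ := SturmAux.W_regular V E (Θ E) (Ρ E) (hW1 E) (hW2 E) hVc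
  have hθEc : Continuous (Θ E) := SturmAux.cont_of_deriv (hΘd E)
  -- positivity of the angle
  have hpos : ∀ (E'' x : ℝ), 0 < x → 0 < Θ E'' x := by
    intro E'' x hx
    have := SturmAux.crossing V E'' (Θ E'') (hΘd E'') 0 0
      (by rw [hΘ0 E'']; push_cast; ring) x hx
    push_cast at this
    linarith
  -- u equals the Prüfer solution on [0, a]
  have hEqU : ∀ x ∈ Icc 0 a, u x = Ρ E x * Real.sin (Θ E x) := by
    have h := SturmAux.second_order_unique V M hM E a u
      (fun x => Ρ E x * Real.sin (Θ E x)) hu hWc2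
      (fun x _ => hode x) (fun x _ => hWd2 x)
      (by show u 0 = Ρ E 0 * Real.sin (Θ E 0); rw [h0, hΘ0 E, Real.sin_zero, mul_zero])
      (by rw [h0', hWd1 0, hΘ0 E, Real.cos_zero, hΡ0 E, one_mul])
    exact fun x hx => (h x hx).1
  set Z := {x ∈ Ioo 0 a | u x = 0} with hZdef
  set Eig := {E' : ℝ | IsDirichletEigenvalue V a E' ∧ E' < E} with hEigdef
  set Kπ := {y : ℝ | (∃ k : ℤ, y = (k:ℝ) * π) ∧ 0 < y ∧ y < Θ E a} with hKdef
  have hZmem : ∀ x, x ∈ Z ↔ x ∈ Ioo 0 a ∧ Real.sin (Θ E x) = 0 := by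
    intro x
    rw [hZdef, mem_sep_iff]
    constructor
    · rintro ⟨hx, hux⟩
      refine ⟨hx, ?_⟩
      have heq := hEqU x ⟨hx.1.le, hx.2.le⟩
      rw [hux] at heq
      rcases mul_eq_zero.mp heq.symm with h | h
      · exact absurd h (ne_of_gt (hΡpos E x))
      · exact h
    · rintro ⟨hx, hsx⟩
      exact ⟨hx, by rw [hEqU x ⟨hx.1.le, hx.2.le⟩, hsx, mul_zero]⟩
  -- bijection between zeros and Kπ
  have hbij1 : BijOn (Θ E) Z Kπ := by
    refine ⟨?_, ?_, ?_⟩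
    · intro x hx
      obtain ⟨hxI, hsx⟩ := (hZmem x).mp hx
      obtain ⟨k, hk⟩ := Real.sin_eq_zero_iff.mp hsx
      have hcross := SturmAux.crossing V E (Θ E) (hΘd E) k x hk.symm a hxI.2
      rw [hk] at hcross
      exact ⟨⟨k, hk.symm⟩, hpos E x hxI.1, hcross⟩
    · intro x1 h1 x2 h2 heq
      obtain ⟨hx1I, hs1⟩ := (hZmem x1).mp h1
      obtain ⟨hx2I, hs2⟩ := (hZmem x2).mp h2
      obtain ⟨k1, hk1⟩ := Real.sin_eq_zero_iff.mp hs1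
      obtain ⟨k2, hk2⟩ := Real.sin_eq_zero_iff.mp hs2
      by_contra hne
      rcases lt_or_gt_of_ne hne with hlt | hgt
      · have hcr := SturmAux.crossing V E (Θ E) (hΘd E) k1 x1 hk1.symm x2 hlt
        rw [hk1, heq] at hcr
        exact lt_irrefl _ hcr
      · have hcr := SturmAux.crossing V E (Θ E) (hΘd E) k2 x2 hk2.symm x1 hgt
        rw [hk2, ← heq] at hcr
        exact lt_irrefl _ hcr
    · intro y hy
      rw [hKdef, mem_setOf_eq] at hy
      obtain ⟨⟨k, hky⟩, hy0, hyT⟩ := hy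
      have hmem : y ∈ Ioo (Θ E 0) (Θ E a) := ⟨by rw [hΘ0 E]; exact hy0, hyT⟩
      obtain ⟨x, hxI, hxy⟩ := intermediate_value_Ioo ha.le hθEc.continuousOn hmem
      refine ⟨x, (hZmem x).mpr ⟨hxI, ?_⟩, hxy⟩
      rw [hxy, hky]
      exact Real.sin_int_mul_pi k
  -- Kπ is finite
  have hKfin : Kπ.Finite := by
    apply Set.Finite.subset ((Set.finite_Icc (0:ℤ) ⌈(Θ E a)/π⌉).image (fun k : ℤ => (k:ℝ) * π))
    rintro y hy
    rw [hKdef, mem_setOf_eq] at hy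
    obtain ⟨⟨k, rfl⟩, hy0, hyT⟩ := hy
    have hπ := Real.pi_pos
    have hk0 : (0:ℝ) < (k:ℝ) := by
      by_contra h
      push_neg at h
      have := mul_le_mul_of_nonneg_right h hπ.le
      rw [zero_mul] at this
      linarith
    refine ⟨k, ⟨?_, ?_⟩, rfl⟩
    · exact_mod_cast hk0.le
    · have h1 : (k:ℝ) ≤ (Θ E a)/π := by
        rw [le_div_iff₀ hπ]
        linarith
      have h2 := Int.le_ceil ((Θ E a)/π)
      exact_mod_cast h1.trans h2
  have hZfin : Z.Finite :=
    Set.Finite.of_finite_image (hKfin.subset (by rw [hbij1.image_eq])) hbij1.injOn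
  -- eigenvalue characterization and monotonicity
  have heig : ∀ E', IsDirichletEigenvalue V a E' ↔ Real.sin (Θ E' a) = 0 := fun E' =>
    SturmAux.eigenvalue_iff V M hM hVc a ha E' (Θ E') (Ρ E') (hΘ0 E') (hΘd E')
      (hΡpos E') (hΡ0 E') (hW1 E') (hW2 E')
  have hmono : ∀ E1 E2 : ℝ, E1 < E2 → Θ E1 a < Θ E2 a := fun E1 E2 h =>
    SturmAux.theta_mono V M hM E1 E2 h (Θ E1) (Θ E2) (hΘ0 E1) (hΘd E1) (hΘ0 E2) (hΘd E2) a ha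
  -- bijection between eigenvalues below E and Kπ
  have hbij2 : BijOn (fun E' => Θ E' a) Eig Kπ := by
    refine ⟨?_, ?_, ?_⟩
    · rintro E' ⟨hev, hlt⟩
      obtain ⟨k, hk⟩ := Real.sin_eq_zero_iff.mp ((heig E').mp hev)
      exact ⟨⟨k, hk.symm⟩, hpos E' a ha, hmono E' E hlt⟩
    · rintro E1 h1 E2 h2 heq
      by_contra hne
      rcases lt_or_gt_of_ne hne with hlt | hgt
      · exact absurd heq (ne_of_lt (hmono E1 E2 hlt))
      · exact absurd heq.symm (ne_of_lt (hmono E2 E1 hgt))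
    · intro y hy
      rw [hKdef, mem_setOf_eq] at hy
      obtain ⟨⟨k, hky⟩, hy0, hyT⟩ := hy
      have hπ := Real.pi_pos
      set E0 := min (-M - 1) E with hE0def
      have hE0E : E0 ≤ E := min_le_right _ _
      have hθE0pi : Θ E0 a < π :=
        SturmAux.theta_lt_pi V M hM E0 (min_le_left _ _) (Θ E0) (Ρ E0) (hΘ0 E0) (hΘd E0)
          (hΡpos E0) (hΡ0 E0) (hW1 E0) (hW2 E0) a ha
      have hk0 : (0:ℝ) < (k:ℝ) := by
        by_contra h
        push_neg at h
        have := mul_le_mul_of_nonneg_right h hπ.le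
        rw [zero_mul] at this
        linarith
      have hk1 : (1:ℝ) ≤ (k:ℝ) := by
        have : (1:ℤ) ≤ k := by exact_mod_cast hk0
        exact_mod_cast this
      have hyπ : π ≤ y := by
        rw [hky]
        nlinarith
      set B := max |E0| |E| with hBdef
      have hcont := SturmAux.theta_param_continuousOn V M hM Θ hΘ0 hΘd a B ha.le
      have hsub : Icc E0 E ⊆ Icc (-B) B := by
        intro E' hE'
        constructor
        · have h1 : |E0| ≤ B := le_max_left _ _
          have h2 := neg_abs_le E0
          linarith [hE'.1]
        · have h1 : |E| ≤ B := le_max_right _ _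
          have h2 := le_abs_self E
          linarith [hE'.2]
      have hcont' : ContinuousOn (fun E' => Θ E' a) (Icc E0 E) := hcont.mono hsub
      have hmem : y ∈ Ico (Θ E0 a) (Θ E a) := ⟨by linarith, hyT⟩
      obtain ⟨E', hE'I, hE'y⟩ := intermediate_value_Ico hE0E hcont' hmem
      refine ⟨E', ⟨?_, hE'I.2⟩, hE'y⟩
      apply (heig E').mpr
      have : Θ E' a = y := hE'y
      rw [this, hky]
      exact Real.sin_int_mul_pi k
  have hEfin : Eig.Finite :=
    Set.Finite.of_finite_image (hKfin.subset (by rw [hbij2.image_eq])) hbij2.injOn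
  refine ⟨hEfin, hZfin, ?_⟩
  have h1 : (Θ E '' Z).ncard = Z.ncard := Set.ncard_image_of_injOn hbij1.injOn
  have h2 : ((fun E' => Θ E' a) '' Eig).ncard = Eig.ncard := Set.ncard_image_of_injOn hbij2.injOn
  rw [hbij1.image_eq] at h1
  rw [hbij2.image_eq] at h2
  rw [← h2, ← h1]
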